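/- Let n ≥ 3 and let M : Fin n → Fin n → Bool be an absorbing state of the binary trust gossip model. If an agent j has at least one outgoing one-way trust relation (j ▷ k for some k), then j has no incoming one-way trust relations: there is no agent i with i ▷ j. -/
import Mathlib


/-- A state `M` is absorbing if for all pairwise distinct agents `a z y`,
if `z` trusts `a` then `z` already agrees with `a` about `y`. -/
def Absorbing {n : ℕ} (M : Fin n → Fin n → Bool) : Prop :=
  ∀ a z y : Fin n, a ≠ z → a ≠ y → z ≠ y → M z a = true → M z y = M a y

/-- In an absorbing state, an agent with an outgoing one-way trust relation
has no incoming one-way trust relations. -/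
theorem no_incoming_if_outgoing {n : ℕ} (hn : 3 ≤ n) (M : Fin n → Fin n → Bool)
    (hdiag : ∀ i, M i i = false) (habs : Absorbing M)
    (j k : Fin n) (hjk : j ≠ k)
    (hout : M j k = true ∧ M k j = false) :
    ¬ ∃ i : Fin n, i ≠ j ∧ M i j = true ∧ M j i = false := by
  rintro ⟨i, hij, hMij, _⟩
  have hik : i ≠ k := by
    rintro rfl
    rw [hout.2] at hMij
    exact Bool.false_ne_true hMij
  have h1 : M i k = M j k := habs j i k (Ne.symm hij) hjk hik hMij
  have h2 : M i j = M k j := habs k i j (Ne.symm hik) (Ne.symm hjk) hij (h1.trans hout.1)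
  rw [hout.2] at h2
  simp [hMij] at h2
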